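/- (Theorem 3, first part) Assume the spectra of A and S are disjoint. Let M_des ∈ ℝ^{p×ν} and M_c ∈ ℝ^{m×ν} satisfy T_S(M_c) = M_des − M_open, and consider the canonical compensator (F, G, H) of order ρ ≥ ν determined by parameters (F_a, F_b, G_a, G_b, H_b). Let Π solve ΠS = AΠ + PL and Π̂ solve Π̂S = AΠ̂ + B·M_c. Then Π_x := Π + Π̂, Π_ξ := [I_ν; 0_{(ρ−ν)×ν}] solves the closed-loop Sylvester equation [Π_x; Π_ξ]S = A_cl[Π_x; Π_ξ] + P_cl·L; consequently the closed-loop moment of the compensator is HΠ_ξ = M_c and the closed-loop moment of the plant is CΠ_x + DHΠ_ξ + QL = M_des. -/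

import Mathlib

open Matrix


lemma fromRows_add' {m₁ m₂ n : Type*} (A₁ B₁ : Matrix m₁ n ℝ) (A₂ B₂ : Matrix m₂ n ℝ) :
    Matrix.fromRows A₁ A₂ + Matrix.fromRows B₁ B₂ = Matrix.fromRows (A₁ + B₁) (A₂ + B₂) := by
  ext (_ | _) _ <;> simp

/-- **Theorem 3, first part.** Assuming disjoint spectra of `A` and `S`, if
`M_c` satisfies `T_S(M_c) = M_des - M_open`, then for the canonical compensator of order
`ρ ≥ ν` (states indexed by `Fin ν ⊕ Fin (ρ-ν)`) determined by `(F_a, F_b, G_a, G_b, H_b)`,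
the pair `Π_x := Π + Π̂`, `Π_ξ := [I_ν; 0]` solves the closed-loop Sylvester equation;
consequently `HΠ_ξ = M_c` and `CΠ_x + DHΠ_ξ + QL = M_des`. -/
theorem canonical_compensator_assigns_moment (n m p q ν ρ : ℕ) (hρ : ν ≤ ρ)
    (A : Matrix (Fin n) (Fin n) ℝ) (B : Matrix (Fin n) (Fin m) ℝ)
    (C : Matrix (Fin p) (Fin n) ℝ) (D : Matrix (Fin p) (Fin m) ℝ)
    (P : Matrix (Fin n) (Fin q) ℝ) (Q : Matrix (Fin p) (Fin q) ℝ)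
    (S : Matrix (Fin ν) (Fin ν) ℝ) (L : Matrix (Fin q) (Fin ν) ℝ)
    (hdisj : ∀ μ : ℂ, ¬(μ ∈ spectrum ℂ (A.map Complex.ofReal) ∧
      μ ∈ spectrum ℂ (S.map Complex.ofReal)))
    (Mdes : Matrix (Fin p) (Fin ν) ℝ) (Mc : Matrix (Fin m) (Fin ν) ℝ)
    (Fa : Matrix (Fin ν) (Fin (ρ - ν)) ℝ) (Fb : Matrix (Fin (ρ - ν)) (Fin (ρ - ν)) ℝ)
    (Ga : Matrix (Fin ν) (Fin p) ℝ) (Gb : Matrix (Fin (ρ - ν)) (Fin p) ℝ)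
    (Hb : Matrix (Fin m) (Fin (ρ - ν)) ℝ)
    (Pi : Matrix (Fin n) (Fin ν) ℝ) (hPi : Pi * S = A * Pi + P * L)
    (Pihat : Matrix (Fin n) (Fin ν) ℝ) (hPihat : Pihat * S = A * Pihat + B * Mc)
    -- `T_S(M_c) = M_des - M_open`:
    (hMc : C * Pihat + D * Mc = Mdes - (C * Pi + Q * L)) :
    -- the canonical compensator `(F, G, H)`:
    (fun (F : Matrix (Fin ν ⊕ Fin (ρ - ν)) (Fin ν ⊕ Fin (ρ - ν)) ℝ)
         (G : Matrix (Fin ν ⊕ Fin (ρ - ν)) (Fin p) ℝ)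
         (H : Matrix (Fin m) (Fin ν ⊕ Fin (ρ - ν)) ℝ) =>
      -- with `Π_x := Π + Π̂` and `Π_ξ := [I_ν; 0]`:
      (fun (Pix : Matrix (Fin n) (Fin ν) ℝ)
           (Piξ : Matrix (Fin ν ⊕ Fin (ρ - ν)) (Fin ν) ℝ) =>
        -- `(Π_x, Π_ξ)` solves the closed-loop Sylvester equation,
        (Matrix.fromRows Pix Piξ * S =
          Matrix.fromBlocks A (B * H) (G * C) (F + G * D * H) * Matrix.fromRows Pix Piξ +
            Matrix.fromRows P (G * Q) * L) ∧
        -- the closed-loop moment of the compensator is `M_c`,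
        H * Piξ = Mc ∧
        -- and the closed-loop moment of the plant is `M_des`:
        C * Pix + D * (H * Piξ) + Q * L = Mdes)
        (Pi + Pihat)
        (Matrix.fromRows (1 : Matrix (Fin ν) (Fin ν) ℝ) (0 : Matrix (Fin (ρ - ν)) (Fin ν) ℝ)))
      (Matrix.fromBlocks (S - Ga * Mdes) Fa (-(Gb * Mdes)) Fb)
      (Matrix.fromRows Ga Gb)
      (Matrix.fromCols Mc Hb) := by
  have hHPiξ : Matrix.fromCols Mc Hb *
      Matrix.fromRows (1 : Matrix (Fin ν) (Fin ν) ℝ) (0 : Matrix (Fin (ρ - ν)) (Fin ν) ℝ) = Mc := by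
    rw [fromCols_mul_fromRows]; simp
  have hsum : C * (Pi + Pihat) + D * Mc + Q * L = Mdes := by
    rw [eq_sub_iff_add_eq] at hMc
    rw [← hMc, Matrix.mul_add C]; abel
  refine ⟨?_, hHPiξ, ?_⟩
  · set H := Matrix.fromCols Mc Hb with hH
    set G := Matrix.fromRows Ga Gb with hG
    set F := Matrix.fromBlocks (S - Ga * Mdes) Fa (-(Gb * Mdes)) Fb with hF
    set Piξ := Matrix.fromRows (1 : Matrix (Fin ν) (Fin ν) ℝ)
      (0 : Matrix (Fin (ρ - ν)) (Fin ν) ℝ) with hPiξ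
    have htop : (Pi + Pihat) * S = A * (Pi + Pihat) + B * H * Piξ + P * L := by
      rw [Matrix.mul_assoc B, hHPiξ, Matrix.add_mul, hPi, hPihat, Matrix.mul_add A]
      abel
    have hFPiξ : F * Piξ = Matrix.fromRows (S - Ga * Mdes) (-(Gb * Mdes)) := by
      rw [hF, hPiξ, fromBlocks_mul_fromRows]; simp
    have hbot : Piξ * S = G * C * (Pi + Pihat) + (F + G * D * H) * Piξ + G * Q * L := by
      rw [Matrix.add_mul F, hFPiξ, Matrix.mul_assoc (G * D), hHPiξ,
          Matrix.mul_assoc G C, Matrix.mul_assoc G D, Matrix.mul_assoc G Q,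
          hG, fromRows_mul, fromRows_mul, fromRows_mul, fromRows_mul,
          fromRows_add', fromRows_add', fromRows_add', fromRows_ext_iff]
      constructor
      · rw [← hsum, Matrix.mul_add Ga, Matrix.mul_add Ga, Matrix.one_mul]; abel
      · rw [← hsum, Matrix.mul_add Gb, Matrix.mul_add Gb, Matrix.zero_mul]; abel
    rw [fromRows_mul (Pi + Pihat) Piξ S, htop, hbot,
        fromBlocks_mul_fromRows (Pi + Pihat) Piξ, fromRows_mul P (G * Q) L, fromRows_add']
  · rw [hHPiξ, ← hsum]
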